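/- The integer-based (DGHV-style) scheme is multiplicatively homomorphic: let p be an odd integer with p ≥ 3, and for i = 1, 2 let cᵢ = mᵢ' + p·qᵢ with qᵢ ∈ ℤ, mᵢ' ∈ ℤ and mᵢ' ≡ mᵢ (mod 2) for messages mᵢ ∈ {0,1}. Then c₁·c₂ = m₁'·m₂' + p·(m₁'·q₂ + m₂'·q₁ + p·q₁·q₂), and if |m₁'·m₂'| < p/2, then ([c₁·c₂]_p) mod 2 = (m₁·m₂) mod 2. -/

import Mathlib

/-- The integer-based (DGHV-style) scheme is multiplicatively homomorphic: for
ciphertexts `cᵢ = mᵢ' + p·qᵢ` with `mᵢ' ≡ mᵢ (mod 2)`, the product satisfies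
`c₁·c₂ = m₁'·m₂' + p·(m₁'·q₂ + m₂'·q₁ + p·q₁·q₂)`, and if `|m₁'·m₂'| < p/2` then
the decryption `([c₁·c₂]_p) mod 2` equals `(m₁·m₂) mod 2`.  Here `Int.bmod x p` is
the representative of `x` modulo `p` in the symmetric interval `[-p/2, p/2)`. -/
theorem dghv_multiplicatively_homomorphic (p : ℕ) (hp_odd : Odd p) (hp : 3 ≤ p)
    (m₁ m₂ m₁' m₂' q₁ q₂ c₁ c₂ : ℤ)
    (hm₁ : m₁ = 0 ∨ m₁ = 1) (hm₂ : m₂ = 0 ∨ m₂ = 1)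
    (hm₁' : m₁' ≡ m₁ [ZMOD 2]) (hm₂' : m₂' ≡ m₂ [ZMOD 2])
    (hc₁ : c₁ = m₁' + (p : ℤ) * q₁) (hc₂ : c₂ = m₂' + (p : ℤ) * q₂) :
    c₁ * c₂ = m₁' * m₂' + (p : ℤ) * (m₁' * q₂ + m₂' * q₁ + (p : ℤ) * q₁ * q₂) ∧
    (((|m₁' * m₂'| : ℤ) : ℚ) < (p : ℚ) / 2 →
      (Int.bmod (c₁ * c₂) p) % 2 = (m₁ * m₂) % 2) := by
  have heq : c₁ * c₂ = m₁' * m₂' + (p : ℤ) * (m₁' * q₂ + m₂' * q₁ + (p : ℤ) * q₁ * q₂) := by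
    subst hc₁ hc₂; ring
  refine ⟨heq, fun hlt => ?_⟩
  set M : ℤ := m₁' * m₂' with hM
  -- reduce to bmod of M
  have h1 : Int.bmod (c₁ * c₂) p = Int.bmod M p := by
    rw [heq, Int.add_mul_bmod_self_left]
  -- |M| small: 2*|M| < p
  have h2 : 2 * |M| < (p : ℤ) := by
    have h2q : ((2 * |M| : ℤ) : ℚ) < ((p : ℤ) : ℚ) := by
      rw [show ((2 * |M| : ℤ) : ℚ) = 2 * ((|M| : ℤ) : ℚ) by push_cast; ring,
        Int.cast_natCast]
      linarith
    exact_mod_cast h2q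
  -- bmod M p = M
  have hbmod : Int.bmod M p = M := by
    rw [Int.bmod_def]
    have hodd : (p : ℤ) % 2 = 1 := by
      obtain ⟨k, hk⟩ := hp_odd; omega
    have hp' : (3 : ℤ) ≤ (p : ℤ) := by exact_mod_cast hp
    have ha1 := le_abs_self M
    have ha2 := neg_abs_le M
    by_cases hMn : 0 ≤ M
    · rw [Int.emod_eq_of_lt hMn (by omega), if_pos (by omega)]
    · have hmod : M % (p : ℤ) = M + p := by
        have hc : (M + (p : ℤ) * 1) % (p : ℤ) = M % (p : ℤ) := Int.add_mul_emod_self_left ..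
        rw [mul_one] at hc
        rw [← hc]
        exact Int.emod_eq_of_lt (by omega) (by omega)
      rw [hmod, if_neg (by omega)]
      ring
  rw [h1, hbmod]
  -- parity
  have e1 : m₁' % 2 = m₁ % 2 := hm₁'
  have e2 : m₂' % 2 = m₂ % 2 := hm₂'
  have : M % 2 = (m₁ * m₂) % 2 := by
    have := Int.ModEq.mul hm₁' hm₂'
    exact this
  exact this
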